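/- Let a : ℕ → {0,1} be the Champernowne-type sequence obtained by concatenating all finite binary words ordered first by length and then lexicographically, and define φ : ℤ → {0,1} by φ(n) = 0 for n < 0 and φ(n) = a_n for n ≥ 0. Let X be the simple graph whose vertex set is ℤ ⊔ {n ∈ ℤ : φ(n) = 1}, whose edges are: {m,n} for integers m, n in the ℤ part with |m − n| = 1, together with, for each n ∈ ℤ with φ(n) = 1, an edge joining the pendant vertex indexed by n to the integer vertex n. Then X is aperiodic: every graph automorphism of X is the identity. -/

import Mathlib

/-- The j-th binary word (j ≥ 2): the binary representation of j with its leading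
digit 1 deleted; `false` stands for the digit 0 and `true` for the digit 1. -/
def champWord (j : ℕ) : List Bool := (Nat.bits j).reverse.tail

/-- The concatenation w₂ w₃ ⋯ w_{m+1} of the first m binary words. -/
def champPrefix (m : ℕ) : List Bool := (List.range m).flatMap (fun i => champWord (i + 2))

/-- The Champernowne-type sequence a : ℕ → {0,1}: the n-th letter of the infinite
concatenation w₂ w₃ w₄ ⋯. -/
def champ (n : ℕ) : Bool := (champPrefix (n + 1)).getD n false

/-- The coloring φ : ℤ → {0,1}: φ(n) = 0 for n < 0 and φ(n) = a_n for n ≥ 0. -/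
def champColoring (n : ℤ) : Bool := if n < 0 then false else champ n.toNat

/-- The graph X: vertex set ℤ ⊔ {n ∈ ℤ : φ(n) = 1}; edges {m,n} for |m - n| = 1 in the
ℤ part, together with an edge joining the pendant vertex indexed by n to the integer
vertex n, for each n with φ(n) = 1. -/
def champGraph : SimpleGraph (ℤ ⊕ {n : ℤ // champColoring n = true}) :=
  SimpleGraph.fromRel (fun a b =>
    match a, b with
    | Sum.inl m, Sum.inl n => n = m + 1
    | Sum.inr p, Sum.inl n => (p : ℤ) = n
    | Sum.inl _, Sum.inr _ => False
    | Sum.inr _, Sum.inr _ => False)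

open Sum

/-! ### Combinatorics of the Champernowne-type sequence -/

lemma ChampAux.bits_ne_nil {n : ℕ} (h : n ≠ 0) : Nat.bits n ≠ [] := by
  intro hb
  have := Nat.size_eq_bits_len n
  rw [hb] at this
  simp at this
  exact h (by simpa using Nat.size_eq_zero.mp this.symm)

lemma ChampAux.tail_append_singleton {l : List Bool} (h : l ≠ []) (b : Bool) :
    (l ++ [b]).tail = l.tail ++ [b] := by
  cases l with
  | nil => exact absurd rfl h
  | cons a t => simp

lemma ChampAux.champWord_odd {n : ℕ} (h : n ≠ 0) :
    champWord (2 * n + 1) = champWord n ++ [true] := by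
  unfold champWord
  rw [Nat.bit1_bits, List.reverse_cons, ChampAux.tail_append_singleton]
  simpa using ChampAux.bits_ne_nil h

lemma ChampAux.champWord_len_pos (m : ℕ) : 1 ≤ (champWord (m + 2)).length := by
  unfold champWord
  rw [List.length_tail, List.length_reverse, Nat.size_eq_bits_len]
  have : 1 < (m + 2).size := Nat.lt_size.mpr (by omega)
  omega

lemma ChampAux.champPrefix_succ (m : ℕ) :
    champPrefix (m + 1) = champPrefix m ++ champWord (m + 2) := by
  unfold champPrefix
  rw [List.range_succ, List.flatMap_append]
  simp

lemma ChampAux.le_champPrefix_len (m : ℕ) : m ≤ (champPrefix m).length := by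
  induction m with
  | zero => simp
  | succ k ih =>
    rw [ChampAux.champPrefix_succ, List.length_append]
    have := ChampAux.champWord_len_pos k
    omega

lemma ChampAux.champPrefix_prefix {m m' : ℕ} (h : m ≤ m') :
    champPrefix m <+: champPrefix m' := by
  induction m' with
  | zero => simp_all
  | succ k ih =>
    rcases Nat.lt_or_ge m (k + 1) with h' | h'
    · exact (ih (by omega)).trans
        (by rw [ChampAux.champPrefix_succ]; exact List.prefix_append _ _)
    · have : m = k + 1 := by omega
      subst this; exact List.prefix_rfl

lemma ChampAux.champ_eq {n m : ℕ} (h : n < (champPrefix m).length) :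
    champ n = (champPrefix m).getD n false := by
  unfold champ
  have h1 : n < (champPrefix (n + 1)).length :=
    lt_of_lt_of_le (by omega) (ChampAux.le_champPrefix_len (n + 1))
  rcases Nat.le_total (n + 1) m with hle | hle
  · rw [List.getD_eq_getElem _ _ h1, List.getD_eq_getElem _ _ h,
      (ChampAux.champPrefix_prefix hle).getElem h1]
  · rw [List.getD_eq_getElem _ _ h1, List.getD_eq_getElem _ _ h,
      (ChampAux.champPrefix_prefix hle).getElem h]

/-- The sequence a takes the value 1 at arbitrarily large positions. -/
lemma ChampAux.champ_true_exists (N : ℕ) : ∃ n : ℕ, N ≤ n ∧ champ n = true := by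
  set nn := N + 1 with hnn
  set m := 2 * nn - 1 with hm
  have hm2 : m + 2 = 2 * nn + 1 := by omega
  have hw : champWord (m + 2) = champWord nn ++ [true] := by
    rw [hm2]; exact ChampAux.champWord_odd (by omega)
  set L := (champPrefix m).length + (champWord nn).length with hL
  have hsucc : champPrefix (m + 1) = (champPrefix m ++ champWord nn) ++ [true] := by
    rw [ChampAux.champPrefix_succ, hw, List.append_assoc]
  have hLlt : L < (champPrefix (m + 1)).length := by
    rw [hsucc]; simp [hL]
  refine ⟨L, ?_, ?_⟩
  · have := ChampAux.le_champPrefix_len m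
    omega
  · rw [ChampAux.champ_eq hLlt, hsucc,
      List.getD_eq_getElem _ _ (by rw [← hsucc]; exact hLlt)]
    exact List.getElem_concat_length (by simp [hL]) _

lemma ChampAux.phi_neg {n : ℤ} (h : n < 0) : champColoring n = false := by
  simp [champColoring, h]

lemma ChampAux.phi_true_exists (N : ℤ) : ∃ n : ℤ, N ≤ n ∧ champColoring n = true := by
  obtain ⟨k, hk, htrue⟩ := ChampAux.champ_true_exists N.toNat
  refine ⟨(k : ℤ), ?_, ?_⟩
  · calc N ≤ (N.toNat : ℤ) := Int.self_le_toNat N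
    _ ≤ (k : ℤ) := by exact_mod_cast hk
  · simpa [champColoring] using htrue

/-! ### Adjacency in the graph -/

lemma ChampAux.adj_inl_inl (m n : ℤ) :
    champGraph.Adj (inl m) (inl n) ↔ n = m + 1 ∨ m = n + 1 := by
  rw [champGraph, SimpleGraph.fromRel_adj]
  simp only [ne_eq, inl.injEq]
  constructor
  · rintro ⟨h, h2⟩; exact h2
  · intro h; omega

lemma ChampAux.adj_inl_inr (n : ℤ) (p : {n : ℤ // champColoring n = true}) :
    champGraph.Adj (inl n) (inr p) ↔ (p : ℤ) = n := by
  rw [champGraph, SimpleGraph.fromRel_adj]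
  simp

lemma ChampAux.not_adj_inr_inr (p q : {n : ℤ // champColoring n = true}) :
    ¬ champGraph.Adj (inr p) (inr q) := by
  rw [champGraph, SimpleGraph.fromRel_adj]
  simp

/-- A vertex with two distinct neighbours. -/
def ChampAux.twoNbrs (v : ℤ ⊕ {n : ℤ // champColoring n = true}) : Prop :=
  ∃ a b : ℤ ⊕ {n : ℤ // champColoring n = true},
    a ≠ b ∧ champGraph.Adj v a ∧ champGraph.Adj v b

lemma ChampAux.twoNbrs_inl (n : ℤ) : ChampAux.twoNbrs (inl n) := by
  refine ⟨inl (n - 1), inl (n + 1), by simp; omega, ?_, ?_⟩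
  · rw [ChampAux.adj_inl_inl]; omega
  · rw [ChampAux.adj_inl_inl]; omega

lemma ChampAux.nbr_inr {p : {n : ℤ // champColoring n = true}}
    {w : ℤ ⊕ {n : ℤ // champColoring n = true}}
    (h : champGraph.Adj (inr p) w) : w = inl (p : ℤ) := by
  cases w with
  | inl m => rw [champGraph.adj_comm, ChampAux.adj_inl_inr] at h; rw [h]
  | inr q => exact absurd h (ChampAux.not_adj_inr_inr p q)

lemma ChampAux.not_twoNbrs_inr (p : {n : ℤ // champColoring n = true}) :
    ¬ ChampAux.twoNbrs (inr p) := by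
  rintro ⟨a, b, hab, ha, hb⟩
  exact hab ((ChampAux.nbr_inr ha).trans (ChampAux.nbr_inr hb).symm)

lemma ChampAux.twoNbrs_map (f : champGraph ≃g champGraph)
    (v : ℤ ⊕ {n : ℤ // champColoring n = true}) :
    ChampAux.twoNbrs (f v) ↔ ChampAux.twoNbrs v := by
  constructor
  · rintro ⟨a, b, hab, ha, hb⟩
    refine ⟨f.symm a, f.symm b, fun h => hab (by simpa using congrArg f h), ?_, ?_⟩
    · rw [← f.map_adj_iff]; simpa using ha
    · rw [← f.map_adj_iff]; simpa using hb
  · rintro ⟨a, b, hab, ha, hb⟩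
    exact ⟨f a, f b, fun h => hab (f.injective h), f.map_adj_iff.mpr ha,
      f.map_adj_iff.mpr hb⟩

lemma ChampAux.exists_inl (f : champGraph ≃g champGraph) (n : ℤ) :
    ∃ k, f (inl n) = inl k := by
  cases h : f (inl n) with
  | inl k => exact ⟨k, rfl⟩
  | inr p =>
    exfalso
    have h2 := (ChampAux.twoNbrs_map f (inl n)).mpr (ChampAux.twoNbrs_inl n)
    rw [h] at h2
    exact ChampAux.not_twoNbrs_inr p h2

lemma ChampAux.exists_inr (f : champGraph ≃g champGraph)
    (p : {n : ℤ // champColoring n = true}) : ∃ q, f (inr p) = inr q := by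
  cases h : f (inr p) with
  | inr q => exact ⟨q, rfl⟩
  | inl k =>
    exfalso
    have h2 := (ChampAux.twoNbrs_map f (inr p)).not.mpr (ChampAux.not_twoNbrs_inr p)
    rw [h] at h2
    exact h2 (ChampAux.twoNbrs_inl k)

/-- The (uncolored) graph X obtained from the path on ℤ by attaching a
pendant vertex at every integer n with φ(n) = 1 is aperiodic: every graph automorphism
of X is the identity. -/
theorem stmt_14 (f : champGraph ≃g champGraph) :
    ∀ v : ℤ ⊕ {n : ℤ // champColoring n = true}, f v = v := by
  choose g hg using ChampAux.exists_inl f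
  choose g' hg' using ChampAux.exists_inl f.symm
  have hgg' : ∀ n, g' (g n) = n := by
    intro n
    have h := hg' (g n)
    rw [← hg n, f.symm_apply_apply] at h
    exact (Sum.inl.inj h).symm
  have ginj : Function.Injective g := fun a b hab => by
    rw [← hgg' a, hab, hgg' b]
  have hadjg : ∀ m n : ℤ, (n = m + 1 ∨ m = n + 1) ↔ (g n = g m + 1 ∨ g m = g n + 1) := by
    intro m n
    rw [← ChampAux.adj_inl_inl m n, ← ChampAux.adj_inl_inl (g m) (g n), ← hg, ← hg,
      f.map_adj_iff]
  have hstep : ∀ n : ℤ, g (n + 1) = g n + 1 ∨ g n = g (n + 1) + 1 :=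
    fun n => (hadjg n (n + 1)).mp (Or.inl rfl)
  have step2 : ∀ n : ℤ, g (n + 2) - g (n + 1) = g (n + 1) - g n := by
    intro n
    have h1 := hstep n
    have h2 := hstep (n + 1)
    rw [show n + 1 + 1 = n + 2 by ring] at h2
    rcases h1 with h1 | h1 <;> rcases h2 with h2 | h2 <;> try omega
    · have h3 : g (n + 2) = g n := by omega
      have := ginj h3; omega
    · have h3 : g (n + 2) = g n := by omega
      have := ginj h3; omega
  set ε := g 1 - g 0 with hε_def
  have hd : ∀ n : ℤ, g (n + 1) - g n = ε := by
    intro n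
    induction n using Int.induction_on with
    | zero => simp [hε_def]
    | succ k ih =>
      have h := step2 k
      rw [show (k : ℤ) + 2 = (k + 1) + 1 by ring] at h
      omega
    | pred k ih =>
      have h := step2 (-(k : ℤ) - 1)
      rw [show (-(k : ℤ) - 1) + 2 = -(k : ℤ) + 1 by ring,
        show (-(k : ℤ) - 1) + 1 = -(k : ℤ) by ring] at h
      rw [show (-(k : ℤ) - 1) + 1 = -(k : ℤ) by ring]
      omega
  have hε : ε = 1 ∨ ε = -1 := by
    have h := hstep 0
    simp only [zero_add] at h
    omega
  have hform : ∀ n : ℤ, g n = g 0 + ε * n := by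
    intro n
    induction n using Int.induction_on with
    | zero => simp
    | succ k ih =>
      have h1 : g ((k : ℤ) + 1) = g k + ε := by have := hd k; omega
      rw [h1, ih]; ring
    | pred k ih =>
      have h1 := hd (-(k : ℤ) - 1)
      rw [show (-(k : ℤ) - 1) + 1 = -(k : ℤ) by ring] at h1
      have h2 : g (-(k : ℤ) - 1) = g (-(k : ℤ)) - ε := by omega
      rw [h2, ih]; ring
  -- colour preservation
  have fwd : ∀ (F : champGraph ≃g champGraph) (G : ℤ → ℤ)
      (hG : ∀ n, F (inl n) = inl (G n)) (n : ℤ),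
      champColoring n = true → champColoring (G n) = true := by
    intro F G hG n h
    have h1 : champGraph.Adj (inl n) (inr ⟨n, h⟩) :=
      (ChampAux.adj_inl_inr n ⟨n, h⟩).mpr rfl
    have h2 := F.map_adj_iff.mpr h1
    obtain ⟨q, hq⟩ := ChampAux.exists_inr F ⟨n, h⟩
    rw [hG n, hq, ChampAux.adj_inl_inr] at h2
    rw [← h2]
    exact q.2
  have hcolor : ∀ n : ℤ, champColoring (g n) = champColoring n := by
    intro n
    cases h1 : champColoring n with
    | true => exact fwd f g hg n h1
    | false =>
      cases h2 : champColoring (g n) with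
      | false => rfl
      | true =>
        have h3 := fwd f.symm g' hg' (g n) h2
        rw [hgg' n, h1] at h3
        exact absurd h3 (by simp)
  -- exclude reflection
  have hε1 : ε = 1 := by
    rcases hε with h | h
    · exact h
    exfalso
    obtain ⟨n, hn, htrue⟩ := ChampAux.phi_true_exists (g 0 + 1)
    have h1 := hcolor n
    rw [hform n, h, htrue] at h1
    have h2 : champColoring (g 0 + -1 * n) = false := ChampAux.phi_neg (by omega)
    rw [h2] at h1
    exact absurd h1 (by simp)
  -- exclude a nonzero shift
  have hc : g 0 = 0 := by
    by_contra hc0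
    have hper : ∀ n : ℤ, champColoring (n + g 0) = champColoring n := by
      intro n
      have h := hcolor n
      rw [hform n, hε1] at h
      rw [show n + g 0 = g 0 + 1 * n by ring]
      exact h
    have hiter : ∀ (k : ℕ) (n : ℤ), champColoring (n + k * g 0) = champColoring n := by
      intro k
      induction k with
      | zero => simp
      | succ k ih =>
        intro n
        have h1 := hper (n + k * g 0)
        rw [ih] at h1
        push_cast
        rw [show n + ((k : ℤ) + 1) * g 0 = n + (k : ℤ) * g 0 + g 0 by ring]
        exact h1
    obtain ⟨n, hn, htrue⟩ := ChampAux.phi_true_exists 0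
    set K := ((n + 1).toNat : ℤ) with hK
    have hK1 : n + 1 ≤ K := Int.self_le_toNat _
    rcases lt_or_gt_of_ne hc0 with hneg | hpos
    · have h2 : K * g 0 ≤ K * (-1) := mul_le_mul_of_nonneg_left (by omega) (by omega)
      have hlt : n + K * g 0 < 0 := by linarith
      have h4 := hiter (n + 1).toNat n
      rw [← hK] at h4
      rw [ChampAux.phi_neg hlt, htrue] at h4
      exact absurd h4 (by simp)
    · have h2 : K * 1 ≤ K * g 0 := mul_le_mul_of_nonneg_left (by omega) (by omega)
      have hlt : n - K * g 0 < 0 := by linarith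
      have h4 := hiter (n + 1).toNat (n - K * g 0)
      rw [← hK, show n - K * g 0 + K * g 0 = n by ring] at h4
      rw [ChampAux.phi_neg hlt, htrue] at h4
      exact absurd h4 (by simp)
  -- conclusion
  have hginl : ∀ n : ℤ, f (inl n) = inl n := by
    intro n
    rw [hg n, hform n, hε1, hc]
    norm_num
  intro v
  cases v with
  | inl n => exact hginl n
  | inr p =>
    obtain ⟨q, hq⟩ := ChampAux.exists_inr f p
    have h1 : champGraph.Adj (inl (p : ℤ)) (inr p) := (ChampAux.adj_inl_inr _ p).mpr rfl
    have h2 := f.map_adj_iff.mpr h1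
    rw [hginl, hq, ChampAux.adj_inl_inr] at h2
    rw [hq]
    congr 1
    exact Subtype.ext h2
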